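/- Let R₀ be a commutative Noetherian ring, let R = ⊕_{j≥0} R_j be a commutative graded ring which is a finitely generated graded R₀-algebra whose degree-zero part is R₀, let I = ⊕_{j≥1} R_j be its irrelevant ideal, and let R̂ be the I-adic completion of R. Then for every graded R-module M = ⊕_{j≥0} M_j (not necessarily finitely generated), the canonical R̂-linear map ψ_M : M ⊗_R R̂ → lim_i M/M^i into the graded completion, induced by the natural map M → lim_i M/M^i, is injective. -/

import Mathlib

set_option linter.unusedSectionVars false

open DirectSum TensorProduct

section

variable (R₀ : Type*) [CommRing R₀]
variable {R : Type*} [CommRing R] [Algebra R₀ R]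
variable (𝒜 : ℕ → Submodule R₀ R) [GradedAlgebra 𝒜]
variable {M : Type*} [AddCommGroup M] [Module R₀ M] [Module R M] [IsScalarTower R₀ R M]
variable (ℳ : ℕ → Submodule R₀ M) [DirectSum.Decomposition ℳ] [SetLike.GradedSMul 𝒜 ℳ]

/-- The filtration of a graded module by grading: `M^i = ⊕_{j ≥ i} M_j`. -/
def gradeFilt (i : ℕ) : Submodule R₀ M :=
  ⨆ j, ⨆ _ : i ≤ j, ℳ j

lemma mem_gradeFilt_of_mem {k i : ℕ} (h : i ≤ k) {m : M} (hm : m ∈ ℳ k) :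
    m ∈ gradeFilt R₀ ℳ i :=
  (le_iSup₂_of_le k h le_rfl : ℳ k ≤ gradeFilt R₀ ℳ i) hm

lemma gradeFilt_zero_eq_top : gradeFilt R₀ ℳ 0 = ⊤ := by
  classical
  rw [eq_top_iff]
  intro m _
  rw [← DirectSum.sum_support_decompose ℳ m]
  exact Submodule.sum_mem _ fun k _ => mem_gradeFilt_of_mem R₀ ℳ (Nat.zero_le k) (SetLike.coe_mem _)

lemma irrelevant_smul_gradeFilt {r : R} (hr : r ∈ (HomogeneousIdeal.irrelevant 𝒜).toIdeal)
    {i : ℕ} {m : M} (hm : m ∈ gradeFilt R₀ ℳ i) :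
    r • m ∈ gradeFilt R₀ ℳ (i + 1) := by
  classical
  refine Submodule.iSup_induction (motive := fun m => r • m ∈ gradeFilt R₀ ℳ (i + 1)) _ hm ?_ ?_ ?_
  · intro j x hx
    by_cases hij : i ≤ j
    · rw [iSup_pos hij] at hx
      have hsum : r • x = ∑ d ∈ (DirectSum.decompose 𝒜 r).support,
          ((DirectSum.decompose 𝒜 r d : R) • x) := by
        conv_lhs => rw [← DirectSum.sum_support_decompose 𝒜 r]
        rw [Finset.sum_smul]
      rw [hsum]
      refine Submodule.sum_mem _ fun d hd => ?_
      have hd0 : d ≠ 0 := by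
        intro h0
        subst h0
        have hz : (DirectSum.decompose 𝒜 r 0 : R) = 0 := by
          have := (HomogeneousIdeal.mem_irrelevant_iff 𝒜 r).mp hr
          rwa [GradedRing.proj_apply] at this
        exact (DFinsupp.mem_support_iff.mp hd) (by exact_mod_cast Subtype.ext hz)
      have hmem : (DirectSum.decompose 𝒜 r d : R) • x ∈ ℳ (d + j) := by
        have := SetLike.GradedSMul.smul_mem (A := 𝒜) (B := ℳ)
          (SetLike.coe_mem (DirectSum.decompose 𝒜 r d)) hx
        simpa [vadd_eq_add] using this
      exact mem_gradeFilt_of_mem R₀ ℳ (by omega) hmem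
    · rw [iSup_neg hij] at hx
      simp only [Submodule.mem_bot] at hx
      subst hx
      show r • (0 : M) ∈ gradeFilt R₀ ℳ (i + 1)
      rw [smul_zero]; exact Submodule.zero_mem _
  · show r • (0 : M) ∈ gradeFilt R₀ ℳ (i + 1)
    rw [smul_zero]; exact Submodule.zero_mem _
  · intro x y hx hy
    show r • (x + y) ∈ gradeFilt R₀ ℳ (i + 1)
    rw [smul_add]; exact Submodule.add_mem _ hx hy

lemma pow_irrelevant_smul_le_gradeFilt (i : ℕ) :
    ∀ x ∈ ((HomogeneousIdeal.irrelevant 𝒜).toIdeal ^ i • (⊤ : Submodule R M)),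
      x ∈ gradeFilt R₀ ℳ i := by
  induction i with
  | zero =>
    intro x _
    rw [gradeFilt_zero_eq_top R₀ ℳ]
    exact Submodule.mem_top
  | succ i ih =>
    intro x hx
    rw [pow_succ', mul_smul] at hx
    exact Submodule.smul_induction_on hx
      (fun r hr y hy => irrelevant_smul_gradeFilt R₀ 𝒜 ℳ hr (ih y hy))
      (fun a b ha hb => Submodule.add_mem _ ha hb)

lemma le_comap_id_of_le {p q : Submodule R₀ M} (h : p ≤ q) :
    p ≤ q.comap (LinearMap.id : M →ₗ[R₀] M) := by
  simpa [Submodule.comap_id] using h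

variable (M) in
/-- The canonical map `ψ_M : M ⊗_R R̂ → lim_i M/M^i`, where `R̂` is the `I`-adic completion
of `R` for the irrelevant ideal `I`.  It is the composite of the canonical map
`M ⊗_R R̂ → \hat{M}` (to the `I`-adic completion of `M`) with the canonical map
`θ_M : \hat{M} → lim_i M/M^i` induced by the containments `I^i·M ⊆ M^i`; in particular it
is induced by the natural map `M → lim_i M/M^i`. -/
noncomputable def psiMap :
    (M ⊗[R] AdicCompletion (HomogeneousIdeal.irrelevant 𝒜).toIdeal R) →
      ∀ i, M ⧸ gradeFilt R₀ ℳ i :=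
  fun x i =>
    Submodule.mapQ _ _ LinearMap.id
      (le_comap_id_of_le R₀ fun m hm => pow_irrelevant_smul_le_gradeFilt R₀ 𝒜 ℳ i m hm)
      ((Submodule.Quotient.restrictScalarsEquiv R₀
          ((HomogeneousIdeal.irrelevant 𝒜).toIdeal ^ i • (⊤ : Submodule R M))).symm
        (AdicCompletion.eval (HomogeneousIdeal.irrelevant 𝒜).toIdeal M i
          (AdicCompletion.ofTensorProduct (HomogeneousIdeal.irrelevant 𝒜).toIdeal M
            (TensorProduct.comm R M
              (AdicCompletion (HomogeneousIdeal.irrelevant 𝒜).toIdeal R) x))))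

end


lemma aux_ofTensorProduct_injective {R : Type*} [CommRing R] [IsNoetherianRing R] (I : Ideal R)
    (M : Type*) [AddCommGroup M] [Module R M] [Module.Finite R M] :
    Function.Injective (AdicCompletion.ofTensorProduct I M) := by
  classical
  obtain ⟨n, p, hp⟩ := Module.Finite.exists_fin' R M
  let e : ((Fin n → R) ⧸ LinearMap.ker p) ≃ₗ[R] M := p.quotKerEquivOfSurjective hp
  haveI : Module.Finite R ((Fin n → R) ⧸ LinearMap.ker p) := Module.Finite.quotient R _
  have hinjQ := (AdicCompletion.ofTensorProduct_bijective_of_finite_of_isNoetherian I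
    ((Fin n → R) ⧸ LinearMap.ker p)).injective
  have hnat := AdicCompletion.ofTensorProduct_naturality I e.toLinearMap
  have hinjmap : Function.Injective (AdicCompletion.map I e.toLinearMap) := by
    intro a b hab
    refine (AdicCompletion.congr I e).injective ?_
    rwa [AdicCompletion.congr_apply, AdicCompletion.congr_apply]
  have hcomp : Function.Injective
      (AdicCompletion.ofTensorProduct I M ∘ₗ
        AlgebraTensorModule.map
          (LinearMap.id : AdicCompletion I R →ₗ[AdicCompletion I R] AdicCompletion I R)
          e.toLinearMap) := by
    rw [← hnat]
    rw [LinearMap.coe_comp]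
    exact hinjmap.comp hinjQ
  have hsurj : Function.Surjective
      (AlgebraTensorModule.map
        (LinearMap.id : AdicCompletion I R →ₗ[AdicCompletion I R] AdicCompletion I R)
        e.toLinearMap) := by
    intro a
    induction a with
    | zero => exact ⟨0, map_zero _⟩
    | tmul r m => exact ⟨r ⊗ₜ e.symm m, by simp⟩
    | add u v hu hv =>
      obtain ⟨u', rfl⟩ := hu
      obtain ⟨v', rfl⟩ := hv
      exact ⟨u' + v', map_add _ _ _⟩
  intro a b hab
  obtain ⟨a', rfl⟩ := hsurj a
  obtain ⟨b', rfl⟩ := hsurj b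
  have := hcomp (a₁ := a') (a₂ := b') (by simpa using hab)
  rw [this]

section auxsec

variable {R₀ : Type*} [CommRing R₀]
variable {R : Type*} [CommRing R] [Algebra R₀ R]
variable (𝒜 : ℕ → Submodule R₀ R) [GradedAlgebra 𝒜]
variable {M : Type*} [AddCommGroup M] [Module R₀ M] [Module R M] [IsScalarTower R₀ R M]
variable (ℳ : ℕ → Submodule R₀ M) [DirectSum.Decomposition ℳ] [SetLike.GradedSMul 𝒜 ℳ]

lemma aux_decompose_smul_of_mem (f : R) {g : M} {d : ℕ} (hg : g ∈ ℳ d) (j : ℕ)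
    [Decidable (d ≤ j)] :
    (DirectSum.decompose ℳ (f • g) j : M) =
      if d ≤ j then (DirectSum.decompose 𝒜 f (j - d) : R) • g else 0 := by
  classical
  conv_lhs => rw [← DirectSum.sum_support_decompose 𝒜 f, Finset.sum_smul]
  rw [DirectSum.decompose_sum]
  rw [DFinsupp.finset_sum_apply]
  rw [AddSubmonoidClass.coe_finset_sum]
  have hterm : ∀ t, (DirectSum.decompose ℳ ((DirectSum.decompose 𝒜 f t : R) • g) j : M) =
      if t = j - d ∧ d ≤ j then (DirectSum.decompose 𝒜 f t : R) • g else 0 := by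
    intro t
    have hmem : (DirectSum.decompose 𝒜 f t : R) • g ∈ ℳ (t + d) := by
      have := SetLike.GradedSMul.smul_mem (A := 𝒜) (B := ℳ)
        (SetLike.coe_mem (DirectSum.decompose 𝒜 f t)) hg
      simpa [vadd_eq_add] using this
    by_cases h : t + d = j
    · rw [if_pos ⟨by omega, by omega⟩]
      rw [← h, DirectSum.decompose_of_mem_same ℳ hmem]
    · rw [if_neg (by omega)]
      rw [DirectSum.decompose_of_mem_ne ℳ hmem h]
  simp_rw [hterm]
  by_cases hdj : d ≤ j
  · simp only [hdj, and_true, if_pos]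
    rw [Finset.sum_ite_eq' ((DirectSum.decompose 𝒜 f).support) (j - d)
      (fun t => (DirectSum.decompose 𝒜 f t : R) • g)]
    by_cases hsupp : j - d ∈ (DirectSum.decompose 𝒜 f).support
    · rw [if_pos hsupp]
    · rw [if_neg hsupp]
      have : (DirectSum.decompose 𝒜 f (j - d)) = 0 := by
        simpa using (DFinsupp.notMem_support_iff.mp hsupp)
      rw [this]
      simp
  · simp [hdj]

lemma aux_mem_irrelevant_of_mem {r : R} {n : ℕ} (hn : n ≠ 0) (hr : r ∈ 𝒜 n) :
    r ∈ (HomogeneousIdeal.irrelevant 𝒜).toIdeal :=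
  (HomogeneousIdeal.mem_irrelevant_iff 𝒜 r).mpr
    (by rw [GradedRing.proj_apply]; exact DirectSum.decompose_of_mem_ne 𝒜 hr hn)

lemma aux_exists_homogeneous_gens [IsNoetherianRing R] :
    ∃ (T : Finset R) (e : ℕ), 0 < e ∧ (∀ g ∈ T, ∃ d, 0 < d ∧ d ≤ e ∧ g ∈ 𝒜 d) ∧
      Ideal.span (T : Set R) = (HomogeneousIdeal.irrelevant 𝒜).toIdeal := by
  classical
  obtain ⟨S, hS⟩ := (isNoetherian_def.mp ‹_› (HomogeneousIdeal.irrelevant 𝒜).toIdeal)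
  set e : ℕ := (S.sup (fun y => (DirectSum.decompose 𝒜 y).support.sup id)) + 1 with he
  refine ⟨S.biUnion (fun y => ((DirectSum.decompose 𝒜 y).support.filter (fun d => 0 < d)).image
      (fun d => (DirectSum.decompose 𝒜 y d : R))), e, Nat.succ_pos _, ?_, ?_⟩
  · intro g hg
    simp only [Finset.mem_biUnion, Finset.mem_image, Finset.mem_filter] at hg
    obtain ⟨y, hy, d, ⟨hds, hd0⟩, rfl⟩ := hg
    refine ⟨d, hd0, ?_, SetLike.coe_mem _⟩
    have h1 : d ≤ (DirectSum.decompose 𝒜 y).support.sup id := Finset.le_sup (f := id) hds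
    have h2 : (DirectSum.decompose 𝒜 y).support.sup id ≤
        S.sup (fun y => (DirectSum.decompose 𝒜 y).support.sup id) := Finset.le_sup (f := fun y => (DirectSum.decompose 𝒜 y).support.sup id) hy
    omega
  · apply le_antisymm
    · rw [Ideal.span_le]
      intro g hg
      simp only [Finset.coe_biUnion, Set.mem_iUnion, Finset.mem_coe, Finset.mem_image,
        Finset.mem_filter] at hg
      obtain ⟨y, hy, d, ⟨hds, hd0⟩, rfl⟩ := hg
      have hyI : y ∈ (HomogeneousIdeal.irrelevant 𝒜).toIdeal := hS ▸ Ideal.subset_span hy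
      exact (HomogeneousIdeal.irrelevant 𝒜).isHomogeneous d hyI
    · rw [← hS]
      refine Submodule.span_le.mpr ?_
      intro y hy
      have hyI : y ∈ (HomogeneousIdeal.irrelevant 𝒜).toIdeal := hS ▸ Submodule.subset_span hy
      rw [← DirectSum.sum_support_decompose 𝒜 y]
      refine Ideal.sum_mem _ fun d hd => ?_
      by_cases hd0 : 0 < d
      · apply Ideal.subset_span
        simp only [Finset.coe_biUnion, Set.mem_iUnion, Finset.mem_coe, Finset.mem_image,
          Finset.mem_filter]
        exact ⟨y, hy, d, ⟨hd, hd0⟩, rfl⟩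
      · have : d = 0 := by omega
        subst this
        have : (DirectSum.decompose 𝒜 y 0 : R) = 0 := by
          have := (HomogeneousIdeal.mem_irrelevant_iff 𝒜 y).mp hyI
          rwa [GradedRing.proj_apply] at this
        rw [this]
        exact Ideal.zero_mem _

lemma aux_grade_le_pow {T : Finset R} {e : ℕ} (he : 0 < e)
    (hT : ∀ g ∈ T, ∃ d, 0 < d ∧ d ≤ e ∧ g ∈ 𝒜 d)
    (hspan : Ideal.span (T : Set R) = (HomogeneousIdeal.irrelevant 𝒜).toIdeal) :
    ∀ k n, k * e ≤ n → ∀ r ∈ 𝒜 n, r ∈ (HomogeneousIdeal.irrelevant 𝒜).toIdeal ^ k := by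
  classical
  intro k
  induction k with
  | zero => intro n _ r _; simp [Ideal.one_eq_top]
  | succ k ih =>
    intro n hn r hr
    have hn1 : n ≠ 0 := by nlinarith
    have hrI : r ∈ Ideal.span (T : Set R) := hspan ▸ aux_mem_irrelevant_of_mem 𝒜 hn1 hr
    obtain ⟨f, -, hf⟩ := Submodule.mem_span_finset.mp hrI
    have hre : r = ∑ g ∈ T, (DirectSum.decompose 𝒜 (f g • g) n : R) := by
      conv_lhs => rw [← DirectSum.decompose_of_mem_same 𝒜 hr, ← hf]
      rw [DirectSum.decompose_sum, DFinsupp.finset_sum_apply, AddSubmonoidClass.coe_finset_sum]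
    rw [hre]
    refine Ideal.sum_mem _ fun g hg => ?_
    obtain ⟨d, hd0, hde, hgd⟩ := hT g hg
    have hdn : d ≤ n := by nlinarith
    rw [smul_eq_mul, DirectSum.coe_decompose_mul_of_right_mem_of_le 𝒜 hgd hdn]
    have hcoef : (DirectSum.decompose 𝒜 (f g) (n - d) : R) ∈
        (HomogeneousIdeal.irrelevant 𝒜).toIdeal ^ k := by
      refine ih (n - d) (by rw [Nat.succ_mul] at hn; omega) _ (SetLike.coe_mem _)
    have hgI : g ∈ (HomogeneousIdeal.irrelevant 𝒜).toIdeal :=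
      hspan ▸ Ideal.subset_span hg
    rw [pow_succ]
    exact Ideal.mul_mem_mul hcoef hgI


lemma aux_module_key (s : Finset M) (D e : ℕ)
    (hs : ∀ g ∈ s, ∃ d, d ≤ D ∧ g ∈ ℳ d)
    (hpow : ∀ k n, k * e ≤ n → ∀ r ∈ 𝒜 n, r ∈ (HomogeneousIdeal.irrelevant 𝒜).toIdeal ^ k)
    (k j : ℕ) (hj : D + k * e ≤ j ∨ k = 0) {m : M}
    (hm : m ∈ Submodule.span R (s : Set M)) :
    (DirectSum.decompose ℳ m j : M) ∈
      ((HomogeneousIdeal.irrelevant 𝒜).toIdeal ^ k • Submodule.span R (s : Set M) :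
        Submodule R M) := by
  classical
  obtain ⟨f, -, hf⟩ := Submodule.mem_span_finset.mp hm
  have hre : (DirectSum.decompose ℳ m j : M) =
      ∑ g ∈ s, (DirectSum.decompose ℳ (f g • g) j : M) := by
    conv_lhs => rw [← hf]
    rw [DirectSum.decompose_sum, DFinsupp.finset_sum_apply, AddSubmonoidClass.coe_finset_sum]
  rw [hre]
  refine Submodule.sum_mem _ fun g hg => ?_
  obtain ⟨d, hdD, hgd⟩ := hs g hg
  rw [aux_decompose_smul_of_mem 𝒜 ℳ (f g) hgd j]
  split_ifs with hdj
  · refine Submodule.smul_mem_smul ?_ (Submodule.subset_span hg)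
    rcases hj with hj | rfl
    · exact hpow k (j - d) (by omega) _ (SetLike.coe_mem _)
    · simp [Ideal.one_eq_top]
  · exact Submodule.zero_mem _

lemma aux_gradeFilt_decompose_eq_zero {i j : ℕ} (hij : j < i) {m : M}
    (hm : m ∈ gradeFilt R₀ ℳ i) : (DirectSum.decompose ℳ m j : M) = 0 := by
  classical
  refine Submodule.iSup_induction
    (motive := fun m => (DirectSum.decompose ℳ m j : M) = 0) _ hm ?_ ?_ ?_
  · intro j' x hx
    by_cases hij' : i ≤ j'
    · rw [iSup_pos hij'] at hx
      exact DirectSum.decompose_of_mem_ne ℳ hx (by omega)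
    · rw [iSup_neg hij'] at hx
      simp only [Submodule.mem_bot] at hx
      subst hx
      simp
  · simp
  · intro x y hx hy
    rw [DirectSum.decompose_add]
    simp only [DirectSum.add_apply, Submodule.coe_add, hx, hy, add_zero]

lemma aux_span_inter_gradeFilt (s : Finset M) (D e : ℕ)
    (hs : ∀ g ∈ s, ∃ d, d ≤ D ∧ g ∈ ℳ d)
    (hpow : ∀ k n, k * e ≤ n → ∀ r ∈ 𝒜 n, r ∈ (HomogeneousIdeal.irrelevant 𝒜).toIdeal ^ k)
    (k : ℕ) {m : M}
    (hm : m ∈ Submodule.span R (s : Set M))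
    (hfilt : m ∈ gradeFilt R₀ ℳ (D + k * e)) :
    m ∈ ((HomogeneousIdeal.irrelevant 𝒜).toIdeal ^ k • Submodule.span R (s : Set M) :
      Submodule R M) := by
  classical
  rw [← DirectSum.sum_support_decompose ℳ m]
  refine Submodule.sum_mem _ fun j hjs => ?_
  by_cases hj : D + k * e ≤ j
  · exact aux_module_key 𝒜 ℳ s D e hs hpow k j (Or.inl hj) hm
  · rw [aux_gradeFilt_decompose_eq_zero ℳ (show j < D + k * e by omega) hfilt]
    exact Submodule.zero_mem _

end auxsec

set_option maxHeartbeats 1600000 in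
/-- **Proposition 4.1(iv) of the paper.**
Let `R₀` be a commutative Noetherian ring, `R = ⊕_j R_j` a commutative graded ring which is
a finitely generated graded `R₀`-algebra with degree-zero part `R₀`, `I = ⊕_{j≥1} R_j` the
irrelevant ideal, and `R̂` the `I`-adic completion of `R`.  Then for every graded
`R`-module `M = ⊕_j M_j` (not necessarily finitely generated), the canonical map
`ψ_M : M ⊗_R R̂ → lim_i M/M^i` into the graded completion, induced by the natural map
`M → lim_i M/M^i`, is injective. -/
theorem weak_completion_to_graded_completion_injective
    (R₀ : Type*) [CommRing R₀] [IsNoetherianRing R₀]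
    (R : Type*) [CommRing R] [Algebra R₀ R]
    (𝒜 : ℕ → Submodule R₀ R) [GradedAlgebra 𝒜]
    (hfg : Algebra.FiniteType R₀ R) (h0 : 𝒜 0 = (1 : Submodule R₀ R))
    (M : Type*) [AddCommGroup M] [Module R₀ M] [Module R M] [IsScalarTower R₀ R M]
    (ℳ : ℕ → Submodule R₀ M) [DirectSum.Decomposition ℳ] [SetLike.GradedSMul 𝒜 ℳ] :
    Function.Injective (psiMap R₀ 𝒜 M ℳ) := by

  classical
  haveI := hfg
  haveI : IsNoetherianRing R := Algebra.FiniteType.isNoetherianRing R₀ R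
  obtain ⟨T, e, he, hT, hspan⟩ := aux_exists_homogeneous_gens 𝒜
  have hpow := aux_grade_le_pow 𝒜 he hT hspan
  set I : Ideal R := (HomogeneousIdeal.irrelevant 𝒜).toIdeal with hIdef
  have hsub : ∀ x y : M ⊗[R] AdicCompletion I R,
      psiMap R₀ 𝒜 M ℳ (x - y) = fun i => psiMap R₀ 𝒜 M ℳ x i - psiMap R₀ 𝒜 M ℳ y i := by
    intro x y
    funext i
    simp only [psiMap, map_sub]
  suffices hker : ∀ w : M ⊗[R] AdicCompletion I R, psiMap R₀ 𝒜 M ℳ w = 0 → w = 0 by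
    intro x y hxy
    have h0 : psiMap R₀ 𝒜 M ℳ (x - y) = 0 := by
      rw [hsub]
      funext i
      rw [congrFun hxy i, sub_self]
      rfl
    exact sub_eq_zero.mp (hker _ h0)
  intro w hw
  set x' := (TensorProduct.comm R M (AdicCompletion I R)) w with hx'
  obtain ⟨S, hS⟩ := TensorProduct.exists_finset x'
  set D : ℕ := S.sup (fun p => (DirectSum.decompose ℳ p.2).support.sup id) with hD
  set s : Finset M := S.biUnion
    (fun p => (DirectSum.decompose ℳ p.2).support.image
      (fun j => (DirectSum.decompose ℳ p.2 j : M))) with hsdef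
  have hs : ∀ g ∈ s, ∃ d, d ≤ D ∧ g ∈ ℳ d := by
    intro g hg
    simp only [hsdef, Finset.mem_biUnion, Finset.mem_image] at hg
    obtain ⟨p, hp, j, hjs, rfl⟩ := hg
    refine ⟨j, ?_, SetLike.coe_mem _⟩
    calc j ≤ (DirectSum.decompose ℳ p.2).support.sup id := Finset.le_sup (f := id) hjs
    _ ≤ D := Finset.le_sup (f := fun p => (DirectSum.decompose ℳ p.2).support.sup id) hp
  set N : Submodule R M := Submodule.span R (s : Set M) with hNdef
  have hmemN : ∀ p ∈ S, (p : (AdicCompletion I R) × M).2 ∈ N := by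
    intro p hp
    rw [← DirectSum.sum_support_decompose ℳ p.2]
    refine Submodule.sum_mem _ fun j hj => Submodule.subset_span ?_
    simp only [hsdef, Finset.coe_biUnion, Set.mem_iUnion, Finset.mem_coe, Finset.mem_image]
    exact ⟨p, hp, j, hj, rfl⟩
  haveI : Module.Finite R N := Module.Finite.iff_fg.mpr ⟨s, rfl⟩
  set z : AdicCompletion I R ⊗[R] N :=
    ∑ p ∈ S.attach, p.1.1 ⊗ₜ (⟨p.1.2, hmemN p.1 p.2⟩ : N) with hz
  have hzmap : (AlgebraTensorModule.map
      (LinearMap.id : AdicCompletion I R →ₗ[AdicCompletion I R] AdicCompletion I R)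
      N.subtype) z = x' := by
    rw [hz, map_sum, hS]
    rw [← Finset.sum_attach S (fun p => p.1 ⊗ₜ[R] p.2)]
    exact Finset.sum_congr rfl fun p _ => by simp
  set yhat := AdicCompletion.ofTensorProduct I N z with hyhat
  have hnat : AdicCompletion.map I N.subtype yhat =
      AdicCompletion.ofTensorProduct I M x' := by
    have h := LinearMap.congr_fun (AdicCompletion.ofTensorProduct_naturality I N.subtype) z
    simp only [LinearMap.comp_apply] at h
    rw [hyhat, h, hzmap]
  have hpsi : ∀ (i : ℕ) (v : N),
      Submodule.Quotient.mk (p := (I ^ i • ⊤ : Submodule R N)) v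
        = AdicCompletion.eval I N i yhat →
      psiMap R₀ 𝒜 M ℳ w i = Submodule.Quotient.mk (p := gradeFilt R₀ ℳ i) (v : M) := by
    intro i v hv
    have h1 : AdicCompletion.eval I M i
        (AdicCompletion.ofTensorProduct I M (TensorProduct.comm R M (AdicCompletion I R) w)) =
        Submodule.Quotient.mk (p := (I ^ i • ⊤ : Submodule R M)) (v : M) := by
      rw [← hx', ← hnat]
      rw [AdicCompletion.eval_apply, AdicCompletion.map_val_apply]
      rw [← AdicCompletion.eval_apply, ← hv]
      exact LinearMap.reduceModIdeal_apply (I ^ i) N.subtype v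
    simp only [psiMap]
    rw [h1, Submodule.Quotient.restrictScalarsEquiv_symm_mk, Submodule.mapQ_apply,
      LinearMap.id_apply]
  have hy0 : yhat = 0 := by
    apply Subtype.ext
    funext k
    have hki : k ≤ D + k * e := by nlinarith
    obtain ⟨v, hv⟩ :=
      Submodule.Quotient.mk_surjective _ (AdicCompletion.eval I N (D + k * e) yhat)
    have hvfilt : (v : M) ∈ gradeFilt R₀ ℳ (D + k * e) := by
      have h2 := hpsi (D + k * e) v hv
      have h3 := congrFun hw (D + k * e)
      rw [h2] at h3
      exact (Submodule.Quotient.mk_eq_zero _).mp h3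
    have hsmul : (v : M) ∈ (I ^ k • N : Submodule R M) :=
      aux_span_inter_gradeFilt 𝒜 ℳ s D e hs hpow k v.2 hvfilt
    have hv' : v ∈ (I ^ k • ⊤ : Submodule R N) := by
      have hmap : (v : M) ∈ Submodule.map N.subtype (I ^ k • ⊤ : Submodule R N) := by
        rw [Submodule.map_smul'', Submodule.map_subtype_top]
        exact hsmul
      obtain ⟨w', hw', hww⟩ := hmap
      have hwv : w' = v := Subtype.ext hww
      rwa [← hwv]
    have h4 : yhat.val (D + k * e) =
        Submodule.Quotient.mk (p := (I ^ (D + k * e) • ⊤ : Submodule R N)) v := by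
      rw [← AdicCompletion.eval_apply, ← hv]
    show yhat.val k = 0
    calc yhat.val k = AdicCompletion.transitionMap I N hki (yhat.val (D + k * e)) :=
          (AdicCompletion.transitionMap_comp_eval_apply I N hki yhat).symm
      _ = Submodule.Quotient.mk (p := (I ^ k • ⊤ : Submodule R N)) v := by
          rw [h4]; rfl
      _ = 0 := (Submodule.Quotient.mk_eq_zero _).mpr hv'
  have hz0 : z = 0 := by
    apply aux_ofTensorProduct_injective I ↥N
    rw [← hyhat, hy0, map_zero]
  have hx'0 : x' = 0 := by rw [← hzmap, hz0, map_zero]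
  have hcw : (TensorProduct.comm R M (AdicCompletion I R)) w = 0 := by rw [← hx', hx'0]
  exact (LinearEquiv.map_eq_zero_iff _).mp hcw
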